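/- Let r(X,Y) ∈ ℚ(X,Y) be a symmetric rational function (r(X,Y) = r(Y,X)) that is not of the form q₁·(X+Y) + q₀ with q₁, q₀ ∈ ℚ, and suppose that for each m ∈ ℕ, writing r(X, mX+Y) = ∑_{i=0}^{n} (P_{m,i}(X)/Q_{m,i}(X))·Yⁱ with P_{m,i}, Q_{m,i} coprime polynomials over ℚ, we have n ≥ 1 and P_{0,n} ≠ 0. If r is nonconstant, then there exists a natural number m and an index i > 0 such that deg P_{m,i} ≠ deg Q_{m,i}. -/

import Mathlib

open Finset

/-- The field ℚ(X,Y) of rational functions in two variables over ℚ. -/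
abbrev QXY := FractionRing (MvPolynomial (Fin 2) ℚ)

/-- The image of `X` in ℚ(X,Y). -/
noncomputable def xx : QXY := algebraMap (MvPolynomial (Fin 2) ℚ) QXY (MvPolynomial.X 0)

/-- The image of `Y` in ℚ(X,Y). -/
noncomputable def yy : QXY := algebraMap (MvPolynomial (Fin 2) ℚ) QXY (MvPolynomial.X 1)

/-- Evaluation of a one-variable polynomial over ℚ at `X`, inside ℚ(X,Y). -/
noncomputable def evX (p : Polynomial ℚ) : QXY :=
  algebraMap (MvPolynomial (Fin 2) ℚ) QXY (Polynomial.aeval (MvPolynomial.X 0) p)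

/-- Evaluation of a one-variable polynomial over ℚ at `Y`, inside ℚ(X,Y). -/
noncomputable def evY (p : Polynomial ℚ) : QXY :=
  algebraMap (MvPolynomial (Fin 2) ℚ) QXY (Polynomial.aeval (MvPolynomial.X 1) p)

noncomputable section Unbal

abbrev Kq : Type := RatFunc ℚ
abbrev Fq : Type := RatFunc Kq

def tK : Kq := RatFunc.X

def mq : ℚ →+* Kq := RatFunc.C
def cxF : Fq := RatFunc.C tK

def eqv : MvPolynomial (Fin 2) ℚ ≃ₐ[ℚ] Polynomial (Polynomial ℚ) :=
  (MvPolynomial.renameEquiv ℚ (Equiv.swap 0 1)).trans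
    ((MvPolynomial.finSuccEquiv ℚ 1).trans
      (Polynomial.mapAlgEquiv
        ((MvPolynomial.finSuccEquiv ℚ 0).trans
          (Polynomial.mapAlgEquiv (MvPolynomial.isEmptyAlgEquiv ℚ (Fin 0))))))

lemma eqv_X0 : eqv (MvPolynomial.X 0) = Polynomial.C Polynomial.X := by
  have h1 : (MvPolynomial.X 1 : MvPolynomial (Fin 2) ℚ) =
      MvPolynomial.X ((0 : Fin 1).succ) := rfl
  simp only [eqv, AlgEquiv.trans_apply, MvPolynomial.renameEquiv_apply, MvPolynomial.rename_X]
  rw [Equiv.swap_apply_left, h1, MvPolynomial.finSuccEquiv_X_succ,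
    Polynomial.coe_mapAlgEquiv, Polynomial.map_C]
  congr 1
  show ((MvPolynomial.finSuccEquiv ℚ 0).trans
      (Polynomial.mapAlgEquiv (MvPolynomial.isEmptyAlgEquiv ℚ (Fin 0))))
      (MvPolynomial.X 0) = Polynomial.X
  rw [AlgEquiv.trans_apply, MvPolynomial.finSuccEquiv_X_zero,
    Polynomial.coe_mapAlgEquiv, Polynomial.map_X]

lemma eqv_X1 : eqv (MvPolynomial.X 1) = Polynomial.X := by
  simp only [eqv, AlgEquiv.trans_apply, MvPolynomial.renameEquiv_apply, MvPolynomial.rename_X]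
  rw [Equiv.swap_apply_right, MvPolynomial.finSuccEquiv_X_zero,
    Polynomial.coe_mapAlgEquiv, Polynomial.map_X]

def gg : MvPolynomial (Fin 2) ℚ →+* Fq :=
  ((algebraMap (Polynomial Kq) Fq).comp
    (Polynomial.mapRingHom (algebraMap (Polynomial ℚ) Kq))).comp eqv.toAlgHom.toRingHom

lemma gg_inj : Function.Injective gg := by
  simp only [gg, RingHom.coe_comp]
  exact ((IsFractionRing.injective (Polynomial Kq) Fq).comp
    (Polynomial.map_injective _ (IsFractionRing.injective (Polynomial ℚ) Kq))).comp
    eqv.injective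

lemma gg_X0 : gg (MvPolynomial.X 0) = cxF := by
  simp [gg, eqv_X0, cxF, tK, Polynomial.map_C, RatFunc.algebraMap_C, RatFunc.algebraMap_X]

lemma gg_X1 : gg (MvPolynomial.X 1) = RatFunc.X := by
  simp [gg, eqv_X1, RatFunc.algebraMap_X]

def φ : QXY →+* Fq := IsFractionRing.lift gg_inj

lemma φ_inj : Function.Injective φ := φ.injective

lemma φ_algebraMap (p : MvPolynomial (Fin 2) ℚ) :
    φ (algebraMap (MvPolynomial (Fin 2) ℚ) QXY p) = gg p :=
  IsFractionRing.lift_algebraMap gg_inj p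

lemma φ_xx : φ xx = cxF := by rw [xx, φ_algebraMap, gg_X0]
lemma φ_yy : φ yy = RatFunc.X := by rw [yy, φ_algebraMap, gg_X1]

lemma φ_evX (p : Polynomial ℚ) :
    φ (evX p) = RatFunc.C (algebraMap (Polynomial ℚ) Kq p) := by
  rw [evX, φ_algebraMap]
  have : gg.comp ((Polynomial.aeval
        (MvPolynomial.X 0 : MvPolynomial (Fin 2) ℚ)).toRingHom.comp
        (RingHom.id (Polynomial ℚ))) =
      (RatFunc.C (K := Kq)).comp (algebraMap (Polynomial ℚ) Kq) := by
    apply Polynomial.ringHom_ext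
    · intro a
      simp only [← RingHom.comp_apply]
      exact RingHom.congr_fun (Subsingleton.elim _ _) a
    · simp [gg_X0, cxF, tK, RatFunc.algebraMap_X]
  exact RingHom.congr_fun this p

lemma φ_evY (p : Polynomial ℚ) :
    φ (evY p) = algebraMap (Polynomial Kq) Fq (p.map mq) := by
  rw [evY, φ_algebraMap]
  have : gg.comp ((Polynomial.aeval
        (MvPolynomial.X 1 : MvPolynomial (Fin 2) ℚ)).toRingHom.comp
        (RingHom.id (Polynomial ℚ))) =
      (algebraMap (Polynomial Kq) Fq).comp (Polynomial.mapRingHom mq) := by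
    apply Polynomial.ringHom_ext
    · intro a
      simp only [← RingHom.comp_apply]
      exact RingHom.congr_fun (Subsingleton.elim _ _) a
    · simp [gg_X1, RatFunc.algebraMap_X]
  exact RingHom.congr_fun this p

def kk : Polynomial ℚ →+* Kq := algebraMap (Polynomial ℚ) Kq

lemma kk_ne_zero {p : Polynomial ℚ} (hp : p ≠ 0) : kk p ≠ 0 := fun h0 =>
  hp (RatFunc.algebraMap_injective ℚ (by simpa [kk] using h0))

lemma φ_div_evX (p q : Polynomial ℚ) :
    φ (evX p / evX q) = RatFunc.C (kk p / kk q) := by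
  rw [map_div₀, φ_evX, φ_evX, map_div₀]; rfl

lemma intDegree_div_eq {p q : Polynomial ℚ} (hq : q ≠ 0)
    (h : p.natDegree = q.natDegree) : (kk p / kk q).intDegree = 0 := by
  by_cases hp : p = 0
  · simp [hp, kk]
  · have hkp : kk p ≠ 0 := kk_ne_zero hp
    have hkq : kk q ≠ 0 := kk_ne_zero hq
    have hx : kk p / kk q ≠ 0 := div_ne_zero hkp hkq
    have h2 : (kk p / kk q) * kk q = kk p := div_mul_cancel₀ _ hkq
    have h3 := congrArg RatFunc.intDegree h2
    rw [RatFunc.intDegree_mul hx hkq] at h3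
    simp only [kk, RatFunc.intDegree_polynomial] at h3
    simp only [kk]
    omega

lemma sum_coeff_eq {n : ℕ} (f : ℕ → Kq) {i : ℕ} (hi : i ≤ n) :
    (∑ j ∈ range (n+1), Polynomial.C (f j) * Polynomial.X ^ j).coeff i = f i := by
  rw [Polynomial.finset_sum_coeff, Finset.sum_eq_single i]
  · simp
  · intro b _ hb
    simp [Polynomial.coeff_C_mul, Polynomial.coeff_X_pow, Ne.symm hb]
  · intro hmem
    exact absurd (mem_range.mpr (by omega)) hmem

lemma coeff_eq_of_sum_eq {n : ℕ} (c e : ℕ → Kq) (a : Kq)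
    (h : ∑ i ∈ range (n+1), RatFunc.C (c i) * RatFunc.X ^ i =
         ∑ i ∈ range (n+1), RatFunc.C (e i) * (RatFunc.X + RatFunc.C a) ^ i) :
    ∀ i, i ≤ n → c i = ∑ j ∈ range (n+1), e j * (a ^ (j - i) * (j.choose i : Kq)) := by
  intro i hi
  have hpoly : (∑ j ∈ range (n+1), Polynomial.C (c j) * Polynomial.X ^ j : Polynomial Kq) =
      ∑ j ∈ range (n+1), Polynomial.C (e j) * (Polynomial.X + Polynomial.C a) ^ j := by
    apply RatFunc.algebraMap_injective Kq
    simpa only [map_sum, map_mul, map_pow, map_add,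
      RatFunc.algebraMap_C, RatFunc.algebraMap_X] using h
  have h2 := congrArg (fun p => Polynomial.coeff p i) hpoly
  simp only [sum_coeff_eq _ hi, Polynomial.finset_sum_coeff,
    Polynomial.coeff_C_mul, Polynomial.coeff_X_add_C_pow] at h2
  exact h2

def ggσ : MvPolynomial (Fin 2) ℚ →+* QXY :=
  (algebraMap (MvPolynomial (Fin 2) ℚ) QXY).comp
    (MvPolynomial.rename (Equiv.swap (0 : Fin 2) 1)).toRingHom

lemma ggσ_inj : Function.Injective ggσ := by
  simp only [ggσ, RingHom.coe_comp, AlgHom.coe_toRingHom]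
  exact (IsFractionRing.injective (MvPolynomial (Fin 2) ℚ) QXY).comp
    (MvPolynomial.rename_injective _ (Equiv.injective _))

def σq : QXY →+* QXY := IsFractionRing.lift ggσ_inj

lemma σq_algebraMap (p : MvPolynomial (Fin 2) ℚ) :
    σq (algebraMap (MvPolynomial (Fin 2) ℚ) QXY p) =
      algebraMap (MvPolynomial (Fin 2) ℚ) QXY
        (MvPolynomial.rename (Equiv.swap (0 : Fin 2) 1) p) :=
  IsFractionRing.lift_algebraMap ggσ_inj p

lemma σq_xx : σq xx = yy := by
  rw [xx, σq_algebraMap, MvPolynomial.rename_X, Equiv.swap_apply_left]; rfl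

lemma σq_yy : σq yy = xx := by
  rw [yy, σq_algebraMap, MvPolynomial.rename_X, Equiv.swap_apply_right]; rfl

lemma σq_evX (p : Polynomial ℚ) : σq (evX p) = evY p := by
  rw [evX, σq_algebraMap, ← Polynomial.aeval_algHom_apply, MvPolynomial.rename_X,
    Equiv.swap_apply_left]; rfl

end Unbal

lemma ratform {x : Kq} {q1 q2 : ℚ} (f : ℚ →+* Kq) (hx : x.intDegree = 0)
    (hxe : x = f q1 + f q2 * tK) : q2 = 0 := by
  by_contra hq2
  have hCeq : f = (RatFunc.C (K := ℚ)) := Subsingleton.elim _ _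
  have hx2 : x = kk (Polynomial.C q2 * Polynomial.X + Polynomial.C q1) := by
    rw [hxe, hCeq]
    simp only [kk, map_add, map_mul, RatFunc.algebraMap_C, RatFunc.algebraMap_X, tK]
    ring
  rw [hx2] at hx
  simp only [kk, RatFunc.intDegree_polynomial] at hx
  rw [Polynomial.natDegree_linear hq2] at hx
  exact one_ne_zero hx

lemma φ_div_evY (p q : Polynomial ℚ) : φ (evY p / evY q)
    = algebraMap (Polynomial Kq) Fq (p.map mq)
      / algebraMap (Polynomial Kq) Fq (q.map mq) := by
  rw [map_div₀, φ_evY, φ_evY]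

lemma ratsolve {x : Kq} {c e g : ℚ} (f : ℚ →+* Kq) (hc : c ≠ 0)
    (h : x * f c = f e + f g * tK) :
    x = f (e / c) + f (g / c) * tK := by
  have hcK : f c ≠ 0 := fun h0 => hc (f.injective (by simpa using h0))
  have h2 : x = (f e + f g * tK) / f c := (eq_div_iff hcK).mpr h
  rw [h2, map_div₀, map_div₀]
  ring

lemma ratform' {x : Kq} {c e g : ℚ} (f : ℚ →+* Kq) (hc : c ≠ 0) (hx : x.intDegree = 0)
    (h : x * f c = f e + f g * tK) :
    g = 0 ∧ x = f (e / c) := by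
  have hxe := ratsolve f hc h
  have hg : g / c = 0 := ratform f hx hxe
  have hg0 : g = 0 := by
    rcases div_eq_zero_iff.mp hg with h' | h'
    · exact h'
    · exact absurd h' hc
  refine ⟨hg0, ?_⟩
  rw [hxe, hg, map_zero, zero_mul, add_zero]

set_option maxHeartbeats 1000000 in
set_option synthInstance.maxHeartbeats 200000 in
/-- Let `r(X,Y) = ∑_{i≤n} (P_{0,i}(X)/Q_{0,i}(X)) Yⁱ` be a symmetric rational function,
not of the form `q₁(X+Y) + q₀` (in particular nonconstant), and suppose for each `m`
the expansion of `r(X, mX+Y)` in powers of `Y` has coefficients `P_{m,i}/Q_{m,i}` in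
lowest terms, with `n ≥ 1` and `P_{0,n} ≠ 0`. Then some coefficient with `i > 0` has
numerator and denominator of different degrees. -/
theorem exists_unbalanced_coefficient (n : ℕ) (P Q : ℕ → ℕ → Polynomial ℚ)
    (hn : 1 ≤ n)
    (hcop : ∀ m i, i ≤ n → IsCoprime (P m i) (Q m i) ∧ Q m i ≠ 0)
    (htop : P 0 n ≠ 0)
    (hsymm : ∑ i ∈ range (n + 1), evX (P 0 i) / evX (Q 0 i) * yy ^ i =
      ∑ i ∈ range (n + 1), evY (P 0 i) / evY (Q 0 i) * xx ^ i)
    (hexp : ∀ m : ℕ, ∑ i ∈ range (n + 1), evX (P m i) / evX (Q m i) * yy ^ i =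
      ∑ i ∈ range (n + 1), evX (P 0 i) / evX (Q 0 i) * ((m : QXY) * xx + yy) ^ i)
    (hnotlin : ¬ ∃ q₁ q₀ : ℚ,
      ∑ i ∈ range (n + 1), evX (P 0 i) / evX (Q 0 i) * yy ^ i =
        algebraMap ℚ QXY q₁ * (xx + yy) + algebraMap ℚ QXY q₀)
    (hnonconst : ¬ ∃ q : ℚ,
      ∑ i ∈ range (n + 1), evX (P 0 i) / evX (Q 0 i) * yy ^ i = algebraMap ℚ QXY q) :
    ∃ m i, 0 < i ∧ i ≤ n ∧ (P m i).natDegree ≠ (Q m i).natDegree := by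
  by_contra hcon
  push_neg at hcon
  set d : ℕ → ℕ → Kq := fun m i => kk (P m i) / kk (Q m i) with hd
  have hbal : ∀ m i, 0 < i → i ≤ n → (d m i).intDegree = 0 := fun m i h1 h2 =>
    intDegree_div_eq (hcop m i h2).2 (hcon m i h1 h2)
  have hd0n : d 0 n ≠ 0 := div_ne_zero (kk_ne_zero htop) (kk_ne_zero (hcop 0 n le_rfl).2)
  have e1 : ∀ m' : ℕ, φ (∑ i ∈ range (n + 1), evX (P m' i) / evX (Q m' i) * yy ^ i)
      = ∑ i ∈ range (n+1), RatFunc.C (d m' i) * RatFunc.X ^ i := by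
    intro m'
    rw [map_sum]
    refine Finset.sum_congr rfl fun i _ => ?_
    rw [map_mul, map_pow, φ_div_evX, φ_yy]
  have hkey : ∀ m : ℕ, ∀ i ≤ n, d m i =
      ∑ j ∈ range (n+1), d 0 j * (((m : Kq) * tK) ^ (j - i) * (j.choose i : Kq)) := by
    intro m i hi
    have e2 : φ (∑ i ∈ range (n + 1), evX (P 0 i) / evX (Q 0 i) * ((m : QXY) * xx + yy) ^ i)
        = ∑ i ∈ range (n+1), RatFunc.C (d 0 i) * (RatFunc.X + RatFunc.C ((m:Kq) * tK)) ^ i := by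
      rw [map_sum]
      refine Finset.sum_congr rfl fun i _ => ?_
      rw [map_mul, map_pow, φ_div_evX, map_add, map_mul, φ_xx, φ_yy, map_natCast]
      have hc : ((m : Fq)) * cxF = RatFunc.C ((m : Kq) * tK) := by
        rw [map_mul, map_natCast]; rfl
      rw [hc, add_comm]
    have h := congrArg φ (hexp m)
    rw [e1 m, e2] at h
    exact coeff_eq_of_sum_eq _ _ _ h i hi
  -- case split
  obtain rfl | hn2 : n = 1 ∨ 2 ≤ n := by omega
  · -- n = 1
    have ha2 : Q 0 0 ≠ 0 := (hcop 0 0 (by omega)).2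
    have hb2 : Q 0 1 ≠ 0 := (hcop 0 1 le_rfl).2
    haveI : CharZero Kq := charZero_of_injective_algebraMap (algebraMap ℚ Kq).injective
    have hune : ∀ p : Polynomial ℚ, p ≠ 0 →
        algebraMap (Polynomial Kq) Fq (p.map mq) ≠ 0 := by
      intro p hp h0
      apply hp
      have h1 : p.map mq = 0 :=
        IsFractionRing.injective (Polynomial Kq) Fq (by simpa using h0)
      exact (Polynomial.map_eq_zero_iff mq.injective).mp h1
    have eY : φ (∑ i ∈ range (1 + 1), evY (P 0 i) / evY (Q 0 i) * xx ^ i)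
        = ∑ i ∈ range (1+1), (algebraMap (Polynomial Kq) Fq ((P 0 i).map mq) /
            algebraMap (Polynomial Kq) Fq ((Q 0 i).map mq)) * cxF ^ i := by
      rw [map_sum]
      refine Finset.sum_congr rfl fun i _ => ?_
      rw [map_mul, map_pow, φ_div_evY, φ_xx]
    have hFq := congrArg φ hsymm
    rw [e1 0, eY] at hFq
    rw [Finset.sum_range_succ, Finset.sum_range_one, pow_zero, mul_one, pow_one,
      Finset.sum_range_succ, Finset.sum_range_one, pow_zero, mul_one, pow_one] at hFq
    have hFq2 : (RatFunc.C (d 0 0) + RatFunc.C (d 0 1) * RatFunc.X) *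
        (algebraMap (Polynomial Kq) Fq ((Q 0 0).map mq) *
          algebraMap (Polynomial Kq) Fq ((Q 0 1).map mq))
        = algebraMap (Polynomial Kq) Fq ((P 0 0).map mq) *
            algebraMap (Polynomial Kq) Fq ((Q 0 1).map mq)
          + algebraMap (Polynomial Kq) Fq ((P 0 1).map mq) *
            algebraMap (Polynomial Kq) Fq ((Q 0 0).map mq) * cxF := by
      rw [hFq]
      field_simp [hune (Q 0 0) ha2, hune (Q 0 1) hb2]
    have hP : (Polynomial.C (d 0 0) + Polynomial.C (d 0 1) * Polynomial.X) *
        ((Q 0 0).map mq * (Q 0 1).map mq)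
        = (P 0 0).map mq * (Q 0 1).map mq
          + (P 0 1).map mq * (Q 0 0).map mq * Polynomial.C tK := by
      apply RatFunc.algebraMap_injective Kq
      simpa only [map_mul, map_add, RatFunc.algebraMap_C, RatFunc.algebraMap_X,
        cxF] using hFq2
    have hco : ∀ j : ℕ, d 0 0 * mq ((Q 0 0*Q 0 1).coeff j)
        + d 0 1 * mq ((Polynomial.X*(Q 0 0*Q 0 1)).coeff j)
        = mq ((P 0 0*Q 0 1).coeff j) + mq ((P 0 1*Q 0 0).coeff j) * tK := by
      intro j
      have h2 : Polynomial.C (d 0 0) * ((Q 0 0*Q 0 1).map mq)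
          + Polynomial.C (d 0 1) * ((Polynomial.X*(Q 0 0*Q 0 1)).map mq)
          = (P 0 0*Q 0 1).map mq
            + ((P 0 1*Q 0 0).map mq) * Polynomial.C tK := by
        simp only [Polynomial.map_mul, Polynomial.map_X]
        linear_combination hP
      have h3 := congrArg (fun p => Polynomial.coeff p j) h2
      simpa only [Polynomial.coeff_add, Polynomial.coeff_C_mul, Polynomial.coeff_mul_C,
        Polynomial.coeff_map] using h3
    set A := Q 0 0 * Q 0 1 with hAdef
    have hAne : A ≠ 0 := mul_ne_zero ha2 hb2
    set N := A.natDegree with hNdef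
    have hlead : A.coeff N ≠ 0 := by
      have := Polynomial.leadingCoeff_ne_zero.mpr hAne
      rwa [Polynomial.leadingCoeff] at this
    have hs1 : d 0 1 * mq (A.coeff N)
        = mq ((P 0 0*Q 0 1).coeff (N+1))
          + mq ((P 0 1*Q 0 0).coeff (N+1)) * tK := by
      have h := hco (N+1)
      rwa [Polynomial.coeff_eq_zero_of_natDegree_lt (by omega), map_zero, mul_zero,
        zero_add, Polynomial.coeff_X_mul] at h
    obtain ⟨-, hδ⟩ := ratform' mq hlead (hbal 0 1 one_pos le_rfl) hs1
    set δ := (P 0 0*Q 0 1).coeff (N+1) / A.coeff N with hδdef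
    have hs2 : d 0 0 * mq (A.coeff N)
        = mq ((P 0 0*Q 0 1).coeff N - δ * ((Polynomial.X*A).coeff N))
          + mq ((P 0 1*Q 0 0).coeff N) * tK := by
      have h := hco N
      rw [hδ] at h
      rw [map_sub, map_mul]
      linear_combination h
    have hd00 : d 0 0
        = mq (((P 0 0*Q 0 1).coeff N - δ * ((Polynomial.X*A).coeff N)) / A.coeff N)
          + mq ((P 0 1*Q 0 0).coeff N / A.coeff N) * tK := ratsolve mq hlead hs2
    set r1 := ((P 0 0*Q 0 1).coeff N - δ * ((Polynomial.X*A).coeff N)) / A.coeff N with hr1d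
    set r2 := (P 0 1*Q 0 0).coeff N / A.coeff N with hr2d
    have hφalg : ∀ q : ℚ, φ (algebraMap ℚ QXY q) = RatFunc.C (mq q) := fun q =>
      RingHom.congr_fun (Subsingleton.elim (φ.comp (algebraMap ℚ QXY))
        ((RatFunc.C (K := Kq)).comp mq)) q
    have claim1 : evX (P 0 0) / evX (Q 0 0) = algebraMap ℚ QXY r1 + algebraMap ℚ QXY r2 * xx := by
      apply φ_inj
      rw [map_add, map_mul, φ_div_evX, φ_xx, hφalg, hφalg]
      rw [show kk (P 0 0) / kk (Q 0 0) = d 0 0 from rfl, hd00, map_add, map_mul]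
      rfl
    have claim2 : evX (P 0 1) / evX (Q 0 1) = algebraMap ℚ QXY δ := by
      apply φ_inj
      rw [φ_div_evX, hφalg]
      rw [show kk (P 0 1) / kk (Q 0 1) = d 0 1 from rfl, hδ]
    have hσalg : ∀ q : ℚ, σq (algebraMap ℚ QXY q) = algebraMap ℚ QXY q := fun q =>
      RingHom.congr_fun (Subsingleton.elim (σq.comp (algebraMap ℚ QXY))
        (algebraMap ℚ QXY)) q
    have claim1Y : evY (P 0 0) / evY (Q 0 0) = algebraMap ℚ QXY r1 + algebraMap ℚ QXY r2 * yy := by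
      have h := congrArg σq claim1
      rwa [map_div₀, σq_evX, σq_evX, map_add, map_mul, σq_xx, hσalg, hσalg] at h
    have claim2Y : evY (P 0 1) / evY (Q 0 1) = algebraMap ℚ QXY δ := by
      have h := congrArg σq claim2
      rwa [map_div₀, σq_evX, σq_evX, hσalg] at h
    rw [Finset.sum_range_succ, Finset.sum_range_one, pow_zero, mul_one, pow_one,
      Finset.sum_range_succ, Finset.sum_range_one, pow_zero, mul_one, pow_one,
      claim1, claim2, claim1Y, claim2Y] at hsymm
    have hxy : xx ≠ yy := by
      intro h
      have h2 := congrArg φ h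
      rw [φ_xx, φ_yy] at h2
      have h3 := congrArg RatFunc.intDegree h2
      rw [show cxF = RatFunc.C tK from rfl, RatFunc.intDegree_C, RatFunc.intDegree_X] at h3
      exact absurd h3 (by norm_num)
    have hfac : (algebraMap ℚ QXY r2 - algebraMap ℚ QXY δ) * (xx - yy) = 0 := by
      linear_combination hsymm
    rcases mul_eq_zero.mp hfac with h0 | h0
    · have hr2δ : r2 = δ := (algebraMap ℚ QXY).injective (sub_eq_zero.mp h0)
      refine hnotlin ⟨δ, r1, ?_⟩
      rw [Finset.sum_range_succ, Finset.sum_range_one, pow_zero, mul_one, pow_one,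
        claim1, claim2, ← hr2δ]
      ring
    · exact hxy (sub_eq_zero.mp h0)

  · obtain ⟨k, rfl⟩ : ∃ k, n = k + 2 := ⟨n - 2, by omega⟩
    have hA := hkey 1 (k+1) (by omega)
    rw [Finset.sum_range_succ, Finset.sum_range_succ] at hA
    rw [Finset.sum_eq_zero (fun j hj => by
      rw [Nat.choose_eq_zero_of_lt (by simpa using hj)]
      simp)] at hA
    simp only [Nat.add_sub_cancel_left, Nat.sub_self, pow_zero, Nat.choose_self,
      Nat.cast_one, one_mul, mul_one, pow_one, zero_add, Nat.cast_one,
      Nat.choose_succ_self_right] at hA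
    have hE : k + 2 - (k+1) = 1 := by omega
    rw [hE, pow_one] at hA
    haveI : CharZero Kq := charZero_of_injective_algebraMap (algebraMap ℚ Kq).injective
    have hA' : d 1 (k+1) = d 0 (k+1) + d 0 (k+2) * (tK * (((k:ℕ)+2 : ℕ) : Kq)) := by
      rw [hA]
    clear hA
    have htk : (tK : Kq) ≠ 0 := RatFunc.X_ne_zero
    have hck : (((k:ℕ)+2 : ℕ) : Kq) ≠ 0 := Nat.cast_ne_zero.mpr (by omega)
    have hw : (tK * (((k:ℕ)+2 : ℕ) : Kq)) ≠ 0 := mul_ne_zero htk hck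
    have hwd : (tK * (((k:ℕ)+2 : ℕ) : Kq)).intDegree = 1 := by
      rw [RatFunc.intDegree_mul htk hck]
      have : (((k:ℕ)+2 : ℕ) : Kq) = RatFunc.C (((k:ℕ)+2 : ℕ) : ℚ) := by
        rw [map_natCast]
      rw [this, RatFunc.intDegree_C, tK, RatFunc.intDegree_X]
      norm_num
    have hwne : d 0 (k+2) * (tK * (((k:ℕ)+2:ℕ) : Kq)) ≠ 0 := mul_ne_zero hd0n hw
    have hwdeg : (d 0 (k+2) * (tK * (((k:ℕ)+2:ℕ) : Kq))).intDegree = 1 := by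
      rw [RatFunc.intDegree_mul hd0n hw, hbal 0 (k+2) (by omega) le_rfl, hwd]
      norm_num
    have hsub : d 0 (k+2) * (tK * (((k:ℕ)+2:ℕ) : Kq)) = d 1 (k+1) + (-(d 0 (k+1))) := by
      rw [hA']; push_cast; ring
    by_cases h01 : d 0 (k+1) = 0
    · rw [h01, neg_zero, add_zero] at hsub
      rw [hsub, hbal 1 (k+1) (by omega) (by omega)] at hwdeg
      exact absurd hwdeg (by norm_num)
    · by_cases h11 : d 1 (k+1) = 0
      · rw [h11, zero_add] at hsub
        rw [hsub, RatFunc.intDegree_neg, hbal 0 (k+1) (by omega) (by omega)] at hwdeg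
        exact absurd hwdeg (by norm_num)
      · have hle := RatFunc.intDegree_add_le (neg_ne_zero.mpr h01) (hsub ▸ hwne)
        rw [← hsub, hwdeg, RatFunc.intDegree_neg, hbal 1 (k+1) (by omega) (by omega),
          hbal 0 (k+1) (by omega) (by omega)] at hle
        exact absurd hle (by norm_num)
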